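/- arXiv:2305.04222 — 4 statements merged into one kernel-verified Lean document; each statement's English description precedes it below -/
import Mathlib

section
/- The additive closure of the relational composition of two place relations equals the composition of their additive closures: (R₁ ∘ R₂)⊕ = (R₁⊕) ∘ (R₂⊕). -/
/-- The additive closure `R⊕` of a place relation `R`: the least marking
relation containing `(0,0)` and closed under pairwise addition of
`R`-related places. -/
inductive AddClosure {S : Type} (R : S → S → Prop) : Multiset S → Multiset S → Prop
  | nil : AddClosure R 0 0
  | cons {s₁ s₂ : S} {m₁ m₂ : Multiset S} :
      R s₁ s₂ → AddClosure R m₁ m₂ → AddClosure R (s₁ ::ₘ m₁) (s₂ ::ₘ m₂)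

lemma addClosure_cons_inv {S : Type} {R : S → S → Prop} {a b : Multiset S}
    (h : AddClosure R a b) : ∀ {s : S} {m : Multiset S}, a = s ::ₘ m →
    ∃ t n, R s t ∧ AddClosure R m n ∧ b = t ::ₘ n := by
  induction h with
  | nil => intro s m h; exact absurd h (by simp)
  | cons hr hc ih =>
    intro s m h
    rcases Multiset.cons_eq_cons.mp h with ⟨rfl, rfl⟩ | ⟨_, cs, rfl, rfl⟩
    · exact ⟨_, _, hr, hc, rfl⟩
    · obtain ⟨t, n, h1, h2, rfl⟩ := ih rfl
      exact ⟨t, _ ::ₘ n, h1, AddClosure.cons hr h2, Multiset.cons_swap _ _ _⟩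

lemma addClosure_zero_inv {S : Type} {R : S → S → Prop} {a b : Multiset S}
    (h : AddClosure R a b) : a = 0 → b = 0 := by
  cases h with
  | nil => simp
  | cons => intro h; exact absurd h (by simp)

/-- `(R₁ ∘ R₂)⊕ = (R₁⊕) ∘ (R₂⊕)`. -/
theorem addClosure_comp {S : Type} (R₁ R₂ : S → S → Prop) :
    AddClosure (Relation.Comp R₁ R₂) =
      Relation.Comp (AddClosure R₁) (AddClosure R₂) := by
  ext a b
  constructor
  · intro h
    induction h with
    | nil => exact ⟨0, .nil, .nil⟩
    | cons hr _ ih =>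
      obtain ⟨c, hc, hr2⟩ := hr
      obtain ⟨m, h1, h2⟩ := ih
      exact ⟨c ::ₘ m, .cons hc h1, .cons hr2 h2⟩
  · rintro ⟨m, h1, h2⟩
    induction h1 generalizing b with
    | nil => rw [addClosure_zero_inv h2 rfl]; exact .nil
    | cons hr _ ih =>
      obtain ⟨t, n, hst, hmn, rfl⟩ := addClosure_cons_inv h2 rfl
      exact .cons ⟨_, hr, hst⟩ (ih _ hmn)
end

section
/- If (m₁, m₂) ∈ R⊕ and m₁' ⊆ m₁ (as multisets), then there exists m₂' ⊆ m₂ such that (m₁', m₂') ∈ R⊕ and (m₁ − m₁', m₂ − m₂') ∈ R⊕, where − denotes multiset difference. -/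
/-- If `(m₁, m₂) ∈ R⊕` and `m₁' ⊆ m₁`, then there is `m₂' ⊆ m₂` with
`(m₁', m₂') ∈ R⊕` and `(m₁ − m₁', m₂ − m₂') ∈ R⊕`. -/
theorem addClosure_split {S : Type} (R : S → S → Prop)
    [DecidableEq S] {m₁ m₂ m₁' : Multiset S} (h : AddClosure R m₁ m₂) (hle : m₁' ≤ m₁) :
    ∃ m₂', m₂' ≤ m₂ ∧ AddClosure R m₁' m₂' ∧
      AddClosure R (m₁ - m₁') (m₂ - m₂') := by
  induction h generalizing m₁' with
  | nil =>
    refine ⟨0, le_refl _, ?_, ?_⟩ <;>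
    · simp [Multiset.le_zero.mp hle]
      exact AddClosure.nil
  | @cons s₁ s₂ n₁ n₂ hR h ih =>
    by_cases hs : s₁ ∈ m₁'
    · have hle' : m₁'.erase s₁ ≤ n₁ := by
        rw [← Multiset.erase_cons_head s₁ n₁]
        exact Multiset.erase_le_erase s₁ hle
      obtain ⟨m₂', h1, h2, h3⟩ := ih hle'
      refine ⟨s₂ ::ₘ m₂', Multiset.cons_le_cons s₂ h1, ?_, ?_⟩
      · have := AddClosure.cons hR h2
        rwa [Multiset.cons_erase hs] at this
      · have e1 : s₁ ::ₘ n₁ - m₁' = n₁ - m₁'.erase s₁ := by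
          conv_lhs => rw [← Multiset.cons_erase hs]
          rw [Multiset.sub_cons, Multiset.erase_cons_head]
        have e2 : s₂ ::ₘ n₂ - (s₂ ::ₘ m₂') = n₂ - m₂' := by
          rw [Multiset.sub_cons, Multiset.erase_cons_head]
        rw [e1, e2]; exact h3
    · have hle' : m₁' ≤ n₁ := by
        rcases Multiset.le_iff_exists_add.mp hle with ⟨t, ht⟩
        have hst : s₁ ∈ t := by
          have : s₁ ∈ m₁' + t := ht ▸ Multiset.mem_cons_self s₁ n₁
          simpa [hs] using this
        rcases Multiset.exists_cons_of_mem hst with ⟨t', rfl⟩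
        have heq : s₁ ::ₘ n₁ = s₁ ::ₘ (m₁' + t') := by
          rw [ht]; simp [Multiset.add_cons, Multiset.cons_swap]
        exact Multiset.le_iff_exists_add.mpr ⟨t', (Multiset.cons_inj_right s₁).mp heq⟩
      obtain ⟨m₂', h1, h2, h3⟩ := ih hle'
      refine ⟨m₂', le_trans h1 (Multiset.le_cons_self n₂ s₂), h2, ?_⟩
      have e1 : s₁ ::ₘ n₁ - m₁' = s₁ ::ₘ (n₁ - m₁') := by
        rw [Multiset.cons_sub_of_le _ hle']
      have e2 : s₂ ::ₘ n₂ - m₂' = s₂ ::ₘ (n₂ - m₂') := by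
        rw [Multiset.cons_sub_of_le _ h1]
      rw [e1, e2]; exact AddClosure.cons hR h3
end

section
/- The relational composition of two place bisimulations is a place bisimulation; consequently place bisimilarity ∼_p is a transitive relation on markings. -/
/-- A transition of a P/T net: pre-set, label, post-set, with nonempty pre-set. -/
structure NetTrans (S A : Type) where
  pre : Multiset S
  lab : A
  post : Multiset S
  pre_ne : pre ≠ 0

/-- A P/T net over places `S` and labels `A`, given by its set of transitions. -/
structure PNet (S A : Type) where
  T : Set (NetTrans S A)

/-- Firing: `m [t⟩ m'` iff `t` is a transition of the net, `pre(t) ⊆ m` and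
`m' = (m − pre(t)) + post(t)`. -/
def Fires {S A : Type} [DecidableEq S] (N : PNet S A) (m : Multiset S) (t : NetTrans S A)
    (m' : Multiset S) : Prop :=
  t ∈ N.T ∧ t.pre ≤ m ∧ m' = m - t.pre + t.post

/-- Interleaving bisimulation on markings. -/
def IntBisim {S A : Type} [DecidableEq S] (N : PNet S A)
    (R : Multiset S → Multiset S → Prop) : Prop :=
  ∀ m₁ m₂, R m₁ m₂ →
    (∀ t₁ m₁', Fires N m₁ t₁ m₁' →
      ∃ t₂ m₂', Fires N m₂ t₂ m₂' ∧ t₁.lab = t₂.lab ∧ R m₁' m₂') ∧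
    (∀ t₂ m₂', Fires N m₂ t₂ m₂' →
      ∃ t₁ m₁', Fires N m₁ t₁ m₁' ∧ t₁.lab = t₂.lab ∧ R m₁' m₂')

/-- Interleaving bisimilarity `∼_int`. -/
def IntBisimilar {S A : Type} [DecidableEq S] (N : PNet S A) (m₁ m₂ : Multiset S) : Prop :=
  ∃ R, IntBisim N R ∧ R m₁ m₂

/-- Place bisimulation. -/
def PlaceBisim {S A : Type} [DecidableEq S] (N : PNet S A) (R : S → S → Prop) : Prop :=
  ∀ m₁ m₂, AddClosure R m₁ m₂ →
    (∀ t₁ m₁', Fires N m₁ t₁ m₁' →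
      ∃ t₂ m₂', Fires N m₂ t₂ m₂' ∧ AddClosure R t₁.pre t₂.pre ∧
        t₁.lab = t₂.lab ∧ AddClosure R t₁.post t₂.post ∧ AddClosure R m₁' m₂') ∧
    (∀ t₂ m₂', Fires N m₂ t₂ m₂' →
      ∃ t₁ m₁', Fires N m₁ t₁ m₁' ∧ AddClosure R t₁.pre t₂.pre ∧
        t₁.lab = t₂.lab ∧ AddClosure R t₁.post t₂.post ∧ AddClosure R m₁' m₂')

/-- Place bisimilarity `∼_p`. -/
def PlaceBisimilar {S A : Type} [DecidableEq S] (N : PNet S A) (m₁ m₂ : Multiset S) : Prop :=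
  ∃ R, PlaceBisim N R ∧ AddClosure R m₁ m₂


lemma addClosure_zero_left {S : Type} {R : S → S → Prop} {m : Multiset S}
    (h : AddClosure R 0 m) : m = 0 := by
  generalize hm : (0 : Multiset S) = n at h
  induction h with
  | nil => rfl
  | cons _ _ _ => simp at hm

lemma addClosure_cons_left {S : Type} {R : S → S → Prop} {s : S} {m m' : Multiset S}
    (h : AddClosure R (s ::ₘ m) m') :
    ∃ s' m'', R s s' ∧ AddClosure R m m'' ∧ m' = s' ::ₘ m'' := by
  generalize hm : s ::ₘ m = n at h
  induction h generalizing s m with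
  | nil => simp at hm
  | @cons a₁ a₂ n₁ n₂ hr hc ih =>
    rcases Multiset.cons_eq_cons.mp hm with ⟨rfl, rfl⟩ | ⟨hne, cs, hc1, hc2⟩
    · exact ⟨a₂, n₂, hr, hc, rfl⟩
    · subst hc1
      obtain ⟨s', m'', hs', hm'', rfl⟩ := ih hc2.symm
      exact ⟨s', a₂ ::ₘ m'', hs', .cons hr hm'',
        by rw [Multiset.cons_swap]⟩


lemma addClosure_comp_iff {S : Type} {R₁ R₂ : S → S → Prop} {m₁ m₃ : Multiset S} :
    AddClosure (Relation.Comp R₁ R₂) m₁ m₃ ↔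
      ∃ m₂, AddClosure R₁ m₁ m₂ ∧ AddClosure R₂ m₂ m₃ := by
  constructor
  · intro h
    induction h with
    | nil => exact ⟨0, .nil, .nil⟩
    | cons hr _ ih =>
      obtain ⟨s, hs1, hs2⟩ := hr
      obtain ⟨m, hm1, hm2⟩ := ih
      exact ⟨s ::ₘ m, .cons hs1 hm1, .cons hs2 hm2⟩
  · rintro ⟨m₂, h1, h2⟩
    induction h1 generalizing m₃ with
    | nil => rw [addClosure_zero_left h2]; exact .nil
    | @cons s₁ s₂ n₁ n₂ hr _ ih =>
      -- h2 : AddClosure R₂ (s₂ ::ₘ n₂) m₃; need inversion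
      obtain ⟨s₃, n₃, hs, hn, rfl⟩ := addClosure_cons_left h2
      exact .cons ⟨s₂, hr, hs⟩ (ih hn)

/-- The relational composition of two place bisimulations is a place
bisimulation; consequently `∼_p` is transitive. -/
theorem placeBisim_comp_trans {S A : Type} [DecidableEq S] (N : PNet S A) :
    (∀ R₁ R₂ : S → S → Prop, PlaceBisim N R₁ → PlaceBisim N R₂ →
      PlaceBisim N (Relation.Comp R₁ R₂)) ∧
    Transitive (PlaceBisimilar N) := by
  have comp : ∀ R₁ R₂ : S → S → Prop, PlaceBisim N R₁ → PlaceBisim N R₂ →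
      PlaceBisim N (Relation.Comp R₁ R₂) := by
    intro R₁ R₂ h₁ h₂ m₁ m₃ hm
    obtain ⟨m₂, hm1, hm2⟩ := addClosure_comp_iff.mp hm
    constructor
    · intro t₁ m₁' hf
      obtain ⟨t₂, m₂', hf₂, hpre, hlab, hpost, hR⟩ := (h₁ m₁ m₂ hm1).1 t₁ m₁' hf
      obtain ⟨t₃, m₃', hf₃, hpre', hlab', hpost', hR'⟩ := (h₂ m₂ m₃ hm2).1 t₂ m₂' hf₂
      exact ⟨t₃, m₃', hf₃, addClosure_comp_iff.mpr ⟨t₂.pre, hpre, hpre'⟩,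
        hlab.trans hlab', addClosure_comp_iff.mpr ⟨t₂.post, hpost, hpost'⟩,
        addClosure_comp_iff.mpr ⟨m₂', hR, hR'⟩⟩
    · intro t₃ m₃' hf
      obtain ⟨t₂, m₂', hf₂, hpre', hlab', hpost', hR'⟩ := (h₂ m₂ m₃ hm2).2 t₃ m₃' hf
      obtain ⟨t₁, m₁', hf₁, hpre, hlab, hpost, hR⟩ := (h₁ m₁ m₂ hm1).2 t₂ m₂' hf₂
      exact ⟨t₁, m₁', hf₁, addClosure_comp_iff.mpr ⟨t₂.pre, hpre, hpre'⟩,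
        hlab.trans hlab', addClosure_comp_iff.mpr ⟨t₂.post, hpost, hpost'⟩,
        addClosure_comp_iff.mpr ⟨m₂', hR, hR'⟩⟩
  refine ⟨comp, ?_⟩
  rintro m₁ m₂ m₃ ⟨R₁, hR₁, h1⟩ ⟨R₂, hR₂, h2⟩
  exact ⟨Relation.Comp R₁ R₂, comp R₁ R₂ hR₁ hR₂,
    addClosure_comp_iff.mpr ⟨m₂, h1, h2⟩⟩
end

section
/- Branching interleaving bisimilarity satisfies the strong stuttering property: if m₁[t₁⟩m₂[t₂⟩m₃ … m_n[t_n⟩m_{n+1} is a firing sequence with l(tᵢ) = τ for all i and m₁ ≈_bri m_{n+1}, then mᵢ ≈_bri m_j for all i, j ∈ {1,…,n+1}. -/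
/-- A single silent (`τ`-labeled) firing step. -/
def SilentStep {S A : Type} [DecidableEq S] (N : PNet S A) (τ : A) (m m' : Multiset S) : Prop :=
  ∃ t, Fires N m t m' ∧ t.lab = τ

/-- A silent firing sequence (possibly empty): `m [σ⟩ m'` with `o(σ) = ε`. -/
def SilentReach {S A : Type} [DecidableEq S] (N : PNet S A) (τ : A) :
    Multiset S → Multiset S → Prop :=
  Relation.ReflTransGen (SilentStep N τ)

/-- Branching interleaving bisimulation. -/
def BrIntBisim {S A : Type} [DecidableEq S] (N : PNet S A) (τ : A)
    (R : Multiset S → Multiset S → Prop) : Prop :=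
  ∀ m₁ m₂, R m₁ m₂ →
    (∀ t₁ m₁', Fires N m₁ t₁ m₁' →
      (t₁.lab = τ ∧ ∃ m₂', SilentReach N τ m₂ m₂' ∧ R m₁ m₂' ∧ R m₁' m₂') ∨
      (∃ m t₂ m₂', SilentReach N τ m₂ m ∧ Fires N m t₂ m₂' ∧
        t₁.lab = t₂.lab ∧ R m₁ m ∧ R m₁' m₂')) ∧
    (∀ t₂ m₂', Fires N m₂ t₂ m₂' →
      (t₂.lab = τ ∧ ∃ m₁', SilentReach N τ m₁ m₁' ∧ R m₁' m₂ ∧ R m₁' m₂') ∨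
      (∃ m t₁ m₁', SilentReach N τ m₁ m ∧ Fires N m t₁ m₁' ∧
        t₁.lab = t₂.lab ∧ R m m₂ ∧ R m₁' m₂'))

/-- Branching interleaving bisimilarity `≈_bri`. -/
def BrIntBisimilar {S A : Type} [DecidableEq S] (N : PNet S A) (τ : A)
    (m₁ m₂ : Multiset S) : Prop :=
  ∃ R, BrIntBisim N τ R ∧ R m₁ m₂

section Aux

variable {S A : Type} [DecidableEq S] (N : PNet S A) (τ : A)

/-- Branching interleaving bisimilarity is itself a branching bisimulation. -/
lemma brBisim_bisimilar : BrIntBisim N τ (BrIntBisimilar N τ) := by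
  rintro m₁ m₂ ⟨R, hR, hm⟩
  obtain ⟨h1, h2⟩ := hR m₁ m₂ hm
  constructor
  · intro t₁ m₁' hf
    rcases h1 t₁ m₁' hf with ⟨hτ, m₂', hs, ha, hb⟩ | ⟨m', t₂, m₂', hs, hf2, hl, ha, hb⟩
    · exact Or.inl ⟨hτ, m₂', hs, ⟨R, hR, ha⟩, ⟨R, hR, hb⟩⟩
    · exact Or.inr ⟨m', t₂, m₂', hs, hf2, hl, ⟨R, hR, ha⟩, ⟨R, hR, hb⟩⟩
  · intro t₂ m₂' hf
    rcases h2 t₂ m₂' hf with ⟨hτ, m₁', hs, ha, hb⟩ | ⟨m', t₁, m₁', hs, hf2, hl, ha, hb⟩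
    · exact Or.inl ⟨hτ, m₁', hs, ⟨R, hR, ha⟩, ⟨R, hR, hb⟩⟩
    · exact Or.inr ⟨m', t₁, m₁', hs, hf2, hl, ⟨R, hR, ha⟩, ⟨R, hR, hb⟩⟩

lemma brBisimilar_symm {a b : Multiset S} (h : BrIntBisimilar N τ a b) :
    BrIntBisimilar N τ b a := by
  obtain ⟨R, hR, hm⟩ := h
  refine ⟨fun x y => R y x, ?_, hm⟩
  intro m₁ m₂ hm'
  obtain ⟨h1, h2⟩ := hR m₂ m₁ hm'
  constructor
  · intro t m' hf
    rcases h2 t m' hf with ⟨hτ, x, hr, ha, hb⟩ | ⟨q, t', x, hr, hf', hl, ha, hb⟩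
    · exact Or.inl ⟨hτ, x, hr, ha, hb⟩
    · exact Or.inr ⟨q, t', x, hr, hf', hl.symm, ha, hb⟩
  · intro t m' hf
    rcases h1 t m' hf with ⟨hτ, x, hr, ha, hb⟩ | ⟨q, t', x, hr, hf', hl, ha, hb⟩
    · exact Or.inl ⟨hτ, x, hr, ha, hb⟩
    · exact Or.inr ⟨q, t', x, hr, hf', hl.symm, ha, hb⟩

lemma brBisimilar_silent_step_match {a b a' : Multiset S} (h : BrIntBisimilar N τ a b)
    (hs : SilentStep N τ a a') :
    ∃ b', SilentReach N τ b b' ∧ BrIntBisimilar N τ a' b' := by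
  obtain ⟨t, hf, hl⟩ := hs
  obtain ⟨h1, _⟩ := brBisim_bisimilar N τ a b h
  rcases h1 t a' hf with ⟨_, b', hr, _, hb⟩ | ⟨q, t₂, b', hr, hf2, hleq, _, hb⟩
  · exact ⟨b', hr, hb⟩
  · exact ⟨b', hr.tail ⟨t₂, hf2, hleq ▸ hl⟩, hb⟩

lemma brBisimilar_silent_reach_match {a b a' : Multiset S} (h : BrIntBisimilar N τ a b)
    (hs : SilentReach N τ a a') :
    ∃ b', SilentReach N τ b b' ∧ BrIntBisimilar N τ a' b' := by
  induction hs with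
  | refl => exact ⟨b, Relation.ReflTransGen.refl, h⟩
  | tail _ hstep ih =>
    obtain ⟨b₁, hr₁, h₁⟩ := ih
    obtain ⟨b₂, hr₂, h₂⟩ := brBisimilar_silent_step_match N τ h₁ hstep
    exact ⟨b₂, hr₁.trans hr₂, h₂⟩

end Aux

/-- Strong stuttering property: in a silent firing sequence
`m₁ [t₁⟩ m₂ [t₂⟩ … [t_n⟩ m_{n+1}` with all transitions labeled `τ`, if the two
end markings are branching interleaving bisimilar, then all the markings in the
sequence are pairwise branching interleaving bisimilar. -/
theorem brIntBisimilar_strong_stuttering {S A : Type} [DecidableEq S] (N : PNet S A) (τ : A)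
    (n : ℕ) (m : Fin (n + 1) → Multiset S)
    (hstep : ∀ i : Fin n, SilentStep N τ (m i.castSucc) (m i.succ))
    (hend : BrIntBisimilar N τ (m 0) (m (Fin.last n))) :
    ∀ i j : Fin (n + 1), BrIntBisimilar N τ (m i) (m j) := by
  -- silent reachability along the sequence
  have hreach : ∀ d : ℕ, ∀ i j : Fin (n + 1), (j : ℕ) = (i : ℕ) + d →
      SilentReach N τ (m i) (m j) := by
    intro d
    induction d with
    | zero =>
      intro i j hij
      have : i = j := Fin.ext (by omega)
      subst this
      exact Relation.ReflTransGen.refl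
    | succ d ih =>
      intro i j hij
      have hlt : (i : ℕ) + d < n := by omega
      set k : Fin (n + 1) := ⟨(i : ℕ) + d, by omega⟩ with hk
      have hik : SilentReach N τ (m i) (m k) := ih i k rfl
      have hstep' : SilentStep N τ (m k) (m j) := by
        have := hstep ⟨(i : ℕ) + d, hlt⟩
        have h1 : (⟨(i : ℕ) + d, hlt⟩ : Fin n).castSucc = k := Fin.ext rfl
        have h2 : (⟨(i : ℕ) + d, hlt⟩ : Fin n).succ = j := Fin.ext (by simp; omega)
        rwa [h1, h2] at this
      exact hik.tail hstep'
  have hto_last : ∀ i : Fin (n + 1), SilentReach N τ (m i) (m (Fin.last n)) :=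
    fun i => hreach (n - (i : ℕ)) i (Fin.last n) (by simp [Fin.last]; omega)
  have hfrom0 : ∀ i : Fin (n + 1), SilentReach N τ (m 0) (m i) :=
    fun i => hreach (i : ℕ) 0 i (by simp)
  -- the candidate relation
  set R : Multiset S → Multiset S → Prop :=
    fun x y => BrIntBisimilar N τ x y ∨ ∃ i j : Fin (n + 1), x = m i ∧ y = m j with hRdef
  have hR : BrIntBisim N τ R := by
    intro m₁ m₂ hm
    rcases hm with hbis | ⟨i, j, hx, hy⟩
    · -- bisimilar pairs: lift the transfer conditions
      obtain ⟨h1, h2⟩ := brBisim_bisimilar N τ m₁ m₂ hbis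
      constructor
      · intro t₁ m₁' hf
        rcases h1 t₁ m₁' hf with ⟨hτ, x, hr, ha, hb⟩ | ⟨q, t₂, x, hr, hf', hl, ha, hb⟩
        · exact Or.inl ⟨hτ, x, hr, Or.inl ha, Or.inl hb⟩
        · exact Or.inr ⟨q, t₂, x, hr, hf', hl, Or.inl ha, Or.inl hb⟩
      · intro t₂ m₂' hf
        rcases h2 t₂ m₂' hf with ⟨hτ, x, hr, ha, hb⟩ | ⟨q, t₁, x, hr, hf', hl, ha, hb⟩
        · exact Or.inl ⟨hτ, x, hr, Or.inl ha, Or.inl hb⟩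
        · exact Or.inr ⟨q, t₁, x, hr, hf', hl, Or.inl ha, Or.inl hb⟩
    · subst hx; subst hy
      constructor
      · -- a move of m i, must be matched from m j
        intro t₁ m₁' hf
        -- m (last n) can silently reach some r with m i ≈ r
        obtain ⟨r, hr, hEr⟩ :=
          brBisimilar_silent_reach_match N τ hend (hfrom0 i)
        obtain ⟨h1, _⟩ := brBisim_bisimilar N τ (m i) r hEr
        have hjr : SilentReach N τ (m j) r := (hto_last j).trans hr
        rcases h1 t₁ m₁' hf with ⟨hτ, r', hrr', ha, hb⟩ | ⟨q, t₂, q', hrq, hfq, hl, ha, hb⟩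
        · exact Or.inl ⟨hτ, r', hjr.trans hrr', Or.inl ha, Or.inl hb⟩
        · exact Or.inr ⟨q, t₂, q', hjr.trans hrq, hfq, hl, Or.inl ha, Or.inl hb⟩
      · -- a move of m j, must be matched from m i
        intro t₂ m₂' hf
        obtain ⟨s, hs, hEs⟩ :=
          brBisimilar_silent_reach_match N τ hend (hfrom0 j)
        -- hEs : m j ≈ s; flip to s ≈ m j
        have hEs' : BrIntBisimilar N τ s (m j) := brBisimilar_symm N τ hEs
        obtain ⟨_, h2⟩ := brBisim_bisimilar N τ s (m j) hEs'
        have his : SilentReach N τ (m i) s := (hto_last i).trans hs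
        rcases h2 t₂ m₂' hf with ⟨hτ, s', hss', ha, hb⟩ | ⟨q, t₁, q', hsq, hfq, hl, ha, hb⟩
        · exact Or.inl ⟨hτ, s', his.trans hss', Or.inl ha, Or.inl hb⟩
        · exact Or.inr ⟨q, t₁, q', his.trans hsq, hfq, hl, Or.inl ha, Or.inl hb⟩
  intro i j
  exact ⟨R, hR, Or.inr ⟨i, j, rfl, rfl⟩⟩
end
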